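/- arXiv:2305.12273 — 6 statements merged into one kernel-verified Lean document; each statement's English description precedes it below -/
import Mathlib

section
/- (Shifting principle) Let A be an associative algebra over ℂ (or an associative ring) and let φ and ψ be additive (linear) maps from A to A satisfying φ(x)·z·φ(y) = φ(x·ψ(z)·y) and ψ(x)·z·ψ(y) = ψ(x·φ(z)·y) for all x, y, z ∈ A. Then for all x, y ∈ A: there exists u ∈ A with u − x = x·ψ(y)·u and u − x = u·ψ(y)·x if and only if there exists w ∈ A with w − φ(x) = φ(x)·y·w and w − φ(x) = w·y·φ(x). Equivalently, x is quasi-invertible in the homotope A_{ψ(y)} if and only if φ(x) is quasi-invertible in the homotope A_y. -/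
/-- Shifting principle: under the intertwining identities for the additive maps `φ` and `ψ`,
`x` is quasi-invertible in the homotope `A_{ψ(y)}` iff `φ(x)` is quasi-invertible in the
homotope `A_y`. -/
theorem shifting_principle {A : Type*} [NonUnitalRing A] (φ ψ : A →+ A)
    (hφ : ∀ x z y : A, φ x * z * φ y = φ (x * ψ z * y))
    (hψ : ∀ x z y : A, ψ x * z * ψ y = ψ (x * φ z * y))
    (x y : A) :
    (∃ u : A, u - x = x * ψ y * u ∧ u - x = u * ψ y * x) ↔
    (∃ w : A, w - φ x = φ x * y * w ∧ w - φ x = w * y * φ x) := by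
  constructor
  · rintro ⟨u, h1, h2⟩
    refine ⟨φ u, ?_, ?_⟩
    · rw [← map_sub, h1]; exact (hφ x y u).symm
    · rw [← map_sub, h2]; exact (hφ u y x).symm
  · rintro ⟨w, h1, h2⟩
    have h1' : w = φ x + φ x * y * w := by
      rw [← h1]; abel
    have h2' : w = φ x + w * y * φ x := by
      rw [← h2]; abel
    have key1 : ψ (y * w * y) = ψ y * x * ψ y + ψ y * x * ψ (y * w * y) := by
      rw [hψ, hψ, ← map_add]
      congr 1
      nth_rewrite 1 [h1']
      simp only [mul_add, add_mul, mul_assoc]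
    have key2 : ψ (y * w * y) = ψ y * x * ψ y + ψ (y * w * y) * x * ψ y := by
      rw [hψ, hψ, ← map_add]
      congr 1
      nth_rewrite 1 [h2']
      simp only [mul_add, add_mul, mul_assoc]
    refine ⟨x + x * ψ y * x + x * ψ (y * w * y) * x, ?_, ?_⟩
    · have : x * ψ y * (x + x * ψ y * x + x * ψ (y * w * y) * x)
          = x * ψ y * x + x * (ψ y * x * ψ y + ψ y * x * ψ (y * w * y)) * x := by
        simp only [mul_add, add_mul, mul_assoc]
        abel
      rw [this, ← key1]; abel
    · have : (x + x * ψ y * x + x * ψ (y * w * y) * x) * ψ y * x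
          = x * ψ y * x + x * (ψ y * x * ψ y + ψ (y * w * y) * x * ψ y) * x := by
        simp only [mul_add, add_mul, mul_assoc]
        abel
      rw [this, ← key2]; abel
end

section
/- Let A be an associative ring, let e ∈ A be an idempotent (e·e = e), and let x ∈ A satisfy x = e·x·e. Suppose that for every u ∈ A with u = e·u·e there exists v ∈ A with v = e·v·e, v − x = v·u·x and v − x = x·u·v (i.e. x is quasi-invertible in every homotope of the corner eAe). Then for every y ∈ A there exists w ∈ A with w − x = w·y·x and w − x = x·y·w; that is, x is quasi-invertible in every homotope A_y of A. -/
/-- If `x = e·x·e` (for an idempotent `e`) is quasi-invertible in every homotope of the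
corner `eAe`, then `x` is quasi-invertible in every homotope of `A`. -/
theorem quasiInvertible_of_corner_quasiInvertible {A : Type*} [NonUnitalRing A]
    (e : A) (he : e * e = e) (x : A) (hx : x = e * x * e)
    (hcorner : ∀ u : A, u = e * u * e →
      ∃ v : A, v = e * v * e ∧ v - x = v * u * x ∧ v - x = x * u * v) :
    ∀ y : A, ∃ w : A, w - x = w * y * x ∧ w - x = x * y * w := by
  intro y
  obtain ⟨v, hv, h1, h2⟩ := hcorner (e * y * e) (by
    simp only [mul_assoc, he]
    simp only [← mul_assoc, he])
  have hve : v * e = v := by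
    conv_lhs => rw [hv, mul_assoc, mul_assoc, he, ← mul_assoc, ← hv]
  have hev : e * v = v := by
    conv_lhs => rw [hv, ← mul_assoc, ← mul_assoc, he, ← hv]
  have hex : e * x = x := by
    conv_lhs => rw [hx, ← mul_assoc, ← mul_assoc, he, ← hx]
  have hxe : x * e = x := by
    conv_lhs => rw [hx, mul_assoc, mul_assoc, he, ← mul_assoc, ← hx]
  refine ⟨v, ?_, ?_⟩
  · rw [h1]
    simp only [← mul_assoc]
    rw [hve, mul_assoc (v * y) e x, hex]
  · rw [h2]
    simp only [← mul_assoc]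
    rw [hxe, mul_assoc (x * y) e v, hev]
end

section
/- Every TRO is semisimple. Precisely: let H and K be complex Hilbert spaces and let M be a norm-closed complex linear subspace of the bounded operators B(H, K) such that x ∘ y* ∘ z ∈ M for all x, y, z ∈ M (y* denoting the Hilbert-space adjoint). If x ∈ M has the property that for every u ∈ M there exists y ∈ M with y − x = y ∘ u* ∘ x and y − x = x ∘ u* ∘ y, then x = 0. -/
open ContinuousLinearMap


private lemma aux_quasi_unit {R : Type*} [Ring R] {b d : R}
    (e1 : d - b = d * b) (e2 : d - b = b * d) : IsUnit (1 - b) := by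
  have hr : (1 - b) * (1 + d) = 1 := by
    have h : (1 - b) * (1 + d) = 1 + d - b - b * d := by noncomm_ring
    rw [h, ← e2]; abel
  have hl : (1 + d) * (1 - b) = 1 := by
    have h : (1 + d) * (1 - b) = 1 + d - b - d * b := by noncomm_ring
    rw [h, ← e1]; abel
  exact ⟨⟨1 - b, 1 + d, hr, hl⟩, rfl⟩

/-- Every TRO is semisimple: an element of a TRO that is quasi-invertible in every
homotope is zero. -/
theorem tro_semisimple {H K : Type*}
    [NormedAddCommGroup H] [InnerProductSpace ℂ H] [CompleteSpace H]
    [NormedAddCommGroup K] [InnerProductSpace ℂ K] [CompleteSpace K]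
    (M : Submodule ℂ (H →L[ℂ] K)) (hclosed : IsClosed (M : Set (H →L[ℂ] K)))
    (hTRO : ∀ x ∈ M, ∀ y ∈ M, ∀ z ∈ M, x ∘L ((adjoint y) ∘L z) ∈ M)
    (x : H →L[ℂ] K) (hx : x ∈ M)
    (hqi : ∀ u ∈ M, ∃ y ∈ M, y - x = y ∘L ((adjoint u) ∘L x) ∧
      y - x = x ∘L ((adjoint u) ∘L y)) :
    x = 0 := by
  set a : H →L[ℂ] H := adjoint x ∘L x with ha_def
  -- Key: for every scalar c, 1 - c • a is a unit.
  have key : ∀ c : ℂ, IsUnit (1 - c • a) := by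
    intro c
    obtain ⟨y, hyM, h1, h2⟩ := hqi ((starRingEnd ℂ c) • x) (M.smul_mem _ hx)
    have hadj : adjoint ((starRingEnd ℂ c) • x) = c • adjoint x := by
      rw [map_smulₛₗ]; simp
    set d : H →L[ℂ] H := c • (adjoint x ∘L y) with hd_def
    have e1 : d - c • a = d * (c • a) := by
      have h1' := congrArg (fun z => (c • adjoint x) ∘L z) h1
      simp only [comp_sub] at h1'
      calc d - c • a = (c • adjoint x) ∘L y - (c • adjoint x) ∘L x := by
            simp [hd_def, ha_def, smul_comp]
        _ = (c • adjoint x) ∘L (y ∘L (adjoint ((starRingEnd ℂ c) • x) ∘L x)) := h1'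
        _ = d * (c • a) := by
            simp only [hadj, mul_def, hd_def, ha_def, smul_comp, comp_smul, comp_assoc,
              smul_smul, mul_comm]
    have e2 : d - c • a = (c • a) * d := by
      have h2' := congrArg (fun z => (c • adjoint x) ∘L z) h2
      simp only [comp_sub] at h2'
      calc d - c • a = (c • adjoint x) ∘L y - (c • adjoint x) ∘L x := by
            simp [hd_def, ha_def, smul_comp]
        _ = (c • adjoint x) ∘L (x ∘L (adjoint ((starRingEnd ℂ c) • x) ∘L y)) := h2'
        _ = (c • a) * d := by
            simp only [hadj, mul_def, hd_def, ha_def, smul_comp, comp_smul, comp_assoc,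
              smul_smul, mul_comm]
    exact aux_quasi_unit e1 e2
  -- Suppose x ≠ 0; derive a contradiction via the spectrum of a = x*x.
  by_contra hx0
  obtain ⟨v, hv⟩ : ∃ v, x v ≠ 0 := by
    by_contra h
    push_neg at h
    exact hx0 (ContinuousLinearMap.ext fun v => by simp [h v])
  haveI : Nontrivial H := ⟨⟨v, 0, fun h => hv (by simp [h])⟩⟩
  have hsa : IsSelfAdjoint a := by
    rw [IsSelfAdjoint, star_eq_adjoint, ha_def, adjoint_comp, adjoint_adjoint]
  have hna : a ≠ 0 := by
    intro h
    have := norm_adjoint_comp_self x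
    rw [← ha_def, h, norm_zero] at this
    exact hx0 (by simpa using (norm_eq_zero.mp (by nlinarith [norm_nonneg x])))
  obtain ⟨μ, hμmem, hμ⟩ := spectrum.exists_nnnorm_eq_spectralRadius (a := a)
  have hrad : spectralRadius ℂ a = ‖a‖₊ := hsa.spectralRadius_eq_nnnorm
  have hμ0 : μ ≠ 0 := by
    intro h
    rw [h, nnnorm_zero, hrad] at hμ
    exact hna (by simpa [nnnorm_eq_zero] using (ENNReal.coe_injective hμ.symm))
  rw [spectrum.mem_iff, Algebra.algebraMap_eq_smul_one] at hμmem
  apply hμmem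
  have := (IsUnit.smul_sub_iff_sub_inv_smul (Units.mk0 μ hμ0) a).mpr ?_
  · simpa [Units.smul_def] using this
  · simpa [Units.smul_def] using key μ⁻¹
end

section
/- Every anti-TRO is semisimple. Precisely: let H and K be complex Hilbert spaces and let M be a norm-closed complex linear subspace of B(H, K) such that x ∘ y* ∘ z ∈ M for all x, y, z ∈ M, equipped with the triple product [x y z] = −(x ∘ y* ∘ z). If x ∈ M has the property that for every u ∈ M there exists y ∈ M with y − x = −(y ∘ u* ∘ x) and y − x = −(x ∘ u* ∘ y), then x = 0. -/
open ContinuousLinearMap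

/-- Every anti-TRO is semisimple: an element of an anti-TRO that is quasi-invertible
in every homotope is zero. -/
theorem antiTRO_semisimple {H K : Type*}
    [NormedAddCommGroup H] [InnerProductSpace ℂ H] [CompleteSpace H]
    [NormedAddCommGroup K] [InnerProductSpace ℂ K] [CompleteSpace K]
    (M : Submodule ℂ (H →L[ℂ] K)) (hclosed : IsClosed (M : Set (H →L[ℂ] K)))
    (hTRO : ∀ x ∈ M, ∀ y ∈ M, ∀ z ∈ M, x ∘L ((adjoint y) ∘L z) ∈ M)
    (x : H →L[ℂ] K) (hx : x ∈ M)
    (hqi : ∀ u ∈ M, ∃ y ∈ M, y - x = -(y ∘L ((adjoint u) ∘L x)) ∧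
      y - x = -(x ∘L ((adjoint u) ∘L y))) :
    x = 0 := by
  by_contra hx0
  have hxnorm : (0:ℝ) < ‖x‖ := norm_pos_iff.mpr hx0
  set r : ℝ := ‖x‖ * ‖x‖ with hr
  have hrpos : (0:ℝ) < r := mul_pos hxnorm hxnorm
  set c : ℂ := -((r : ℂ)⁻¹) with hc
  set u : H →L[ℂ] K := c • x with hu_def
  have hu : u ∈ M := M.smul_mem c hx
  obtain ⟨y, hyM, h1, h2⟩ := hqi u hu
  set a : H →L[ℂ] H := adjoint x ∘L x with ha_def
  set t : H →L[ℂ] H := adjoint u ∘L x with ht_def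
  set s : H →L[ℂ] H := adjoint u ∘L y with hs_def
  -- key identities: s - t = -(s * t) and s - t = -(t * s)
  have e1 : s - t = -(s * t) := by
    have := congrArg (fun z => adjoint u ∘L z) h1
    simp only [comp_sub, comp_neg] at this
    rw [mul_def, hs_def, ht_def, comp_assoc]; exact this
  have e2 : s - t = -(t * s) := by
    have := congrArg (fun z => adjoint u ∘L z) h2
    simp only [comp_sub, comp_neg] at this
    rw [mul_def, hs_def, ht_def, comp_assoc]; exact this
  -- hence 1 + t is a unit with inverse 1 - s
  have hunit : IsUnit (1 + t) := by
    refine isUnit_iff_exists.mpr ⟨1 - s, ?_, ?_⟩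
    · have h3 : t * s = t - s := by rw [← neg_sub s t, e2, neg_neg]
      rw [add_mul, one_mul, mul_sub, mul_one, h3]
      abel
    · have h3 : s * t = t - s := by rw [← neg_sub s t, e1, neg_neg]
      rw [sub_mul, one_mul, mul_add, mul_one, h3]
      abel
  -- compute t = c • a
  have hcc : (starRingEnd ℂ) c = c := by
    rw [hc]
    simp [← Complex.ofReal_inv]
  have ht : t = c • a := by
    rw [ht_def, hu_def, ha_def, map_smulₛₗ adjoint c x, hcc, smul_comp]
  -- (r : ℂ) • (1 + t) = algebraMap ℝ _ r - a
  have hrc : (r : ℂ) ≠ 0 := by exact_mod_cast hrpos.ne'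
  have key : (algebraMap ℝ (H →L[ℂ] H) r) - a = (r : ℂ) • (1 + t) := by
    rw [ht, smul_add, smul_smul, hc, mul_neg, mul_inv_cancel₀ hrc, neg_one_smul]
    have halg : (algebraMap ℝ (H →L[ℂ] H) r) = (r : ℂ) • (1 : H →L[ℂ] H) := by
      rw [Algebra.algebraMap_eq_smul_one, Complex.coe_smul]
    rw [halg]; abel
  have hunit2 : IsUnit ((algebraMap ℝ (H →L[ℂ] H) r) - a) := by
    rw [key, Algebra.smul_def]
    exact ((isUnit_iff_ne_zero.mpr hrc).map (algebraMap ℂ (H →L[ℂ] H))).mul hunit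
  -- but ‖a‖ = r is in the real spectrum of a since a ≥ 0
  have hnontriv : Nontrivial (H →L[ℂ] H) := by
    refine ⟨1, 0, fun h => hx0 ?_⟩
    ext v
    have : (1 : H →L[ℂ] H) v = (0 : H →L[ℂ] H) v := by rw [h]
    simp only [one_apply, zero_apply] at this
    simp [show v = 0 from this]
  have hapos : (0 : H →L[ℂ] H) ≤ a := by
    rw [ContinuousLinearMap.nonneg_iff_isPositive]
    simpa [ha_def, one_def] using (ContinuousLinearMap.isPositive_one (E := K)).adjoint_conj x
  have hna : ‖a‖ = r := by
    rw [ha_def, hr]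
    exact ContinuousLinearMap.norm_adjoint_comp_self x
  have hspec : ‖a‖ ∈ spectrum ℝ a := CStarAlgebra.norm_mem_spectrum_of_nonneg hapos
  rw [spectrum.mem_iff, hna] at hspec
  exact hspec hunit2
end

section
/- Cube roots exist in TROs: let H and K be complex Hilbert spaces and let M be a norm-closed complex linear subspace of B(H, K) such that x ∘ y* ∘ z ∈ M for all x, y, z ∈ M. Then for every a ∈ M there exists b ∈ M with a = b ∘ b* ∘ b. -/
open ContinuousLinearMap

section TROAux

variable {H K : Type*}
    [NormedAddCommGroup H] [InnerProductSpace ℂ H] [CompleteSpace H]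
    [NormedAddCommGroup K] [InnerProductSpace ℂ K] [CompleteSpace K]

private lemma tro_pow_mem (M : Submodule ℂ (H →L[ℂ] K))
    (hTRO : ∀ x ∈ M, ∀ y ∈ M, ∀ z ∈ M, x ∘L ((adjoint y) ∘L z) ∈ M)
    {a : H →L[ℂ] K} (ha : a ∈ M) :
    ∀ n : ℕ, a ∘L (adjoint a ∘L a) ^ n ∈ M := by
  intro n
  induction n with
  | zero => simpa [ContinuousLinearMap.one_def] using ha
  | succ n ih =>
      rw [pow_succ', ContinuousLinearMap.mul_def, ContinuousLinearMap.comp_assoc]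
      exact hTRO a ha a ha _ ih

private lemma tro_poly_mem (M : Submodule ℂ (H →L[ℂ] K))
    (hTRO : ∀ x ∈ M, ∀ y ∈ M, ∀ z ∈ M, x ∘L ((adjoint y) ∘L z) ∈ M)
    {a : H →L[ℂ] K} (ha : a ∈ M) (p : Polynomial ℝ) :
    a ∘L (Polynomial.aeval (adjoint a ∘L a) p : H →L[ℂ] H) ∈ M := by
  induction p using Polynomial.induction_on' with
  | add p q hp hq => rw [map_add, ContinuousLinearMap.comp_add]; exact M.add_mem hp hq
  | monomial n c =>
      rw [Polynomial.aeval_monomial, Algebra.algebraMap_eq_smul_one, smul_mul_assoc, one_mul,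
        ← algebraMap_smul ℂ c, ContinuousLinearMap.comp_smul]
      exact M.smul_mem _ (tro_pow_mem M hTRO ha n)

private lemma tro_sa {a : H →L[ℂ] K} : IsSelfAdjoint (adjoint a ∘L a) := by
  rw [IsSelfAdjoint, star_eq_adjoint, adjoint_comp, adjoint_adjoint]

private lemma tro_spec_nonneg {a : H →L[ℂ] K} {s : ℝ}
    (hs : s ∈ spectrum ℝ (adjoint a ∘L a)) : 0 ≤ s := by
  refine spectrum_nonneg_of_nonneg ?_ hs
  rw [nonneg_iff_isPositive]
  simpa [ContinuousLinearMap.one_def] using (isPositive_one (E := K) (𝕜 := ℂ)).adjoint_conj a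


private lemma tro_cfc_mem (M : Submodule ℂ (H →L[ℂ] K))
    (hclosed : IsClosed (M : Set (H →L[ℂ] K)))
    (hTRO : ∀ x ∈ M, ∀ y ∈ M, ∀ z ∈ M, x ∘L ((adjoint y) ∘L z) ∈ M)
    {a : H →L[ℂ] K} (ha : a ∈ M) {f : ℝ → ℝ} (hf : Continuous f) :
    a ∘L cfc f (adjoint a ∘L a) ∈ M := by
  set T : H →L[ℂ] H := adjoint a ∘L a with hTdef
  have hTsa : IsSelfAdjoint T := tro_sa
  set B : ℝ := ‖T‖ * ‖(1 : H →L[ℂ] H)‖ with hB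
  have hspec : spectrum ℝ T ⊆ Set.Icc 0 B := by
    intro s hs
    refine ⟨tro_spec_nonneg hs, ?_⟩
    have := spectrum.subset_closedBall_norm_mul (𝕜 := ℝ) T hs
    simp only [Metric.mem_closedBall, dist_zero_right, Real.norm_eq_abs] at this
    exact (le_abs_self s).trans this
  rw [← SetLike.mem_coe, ← hclosed.closure_eq]
  refine Metric.mem_closure_iff.mpr fun ε hε => ?_
  obtain ⟨p, hp⟩ := exists_polynomial_near_of_continuousOn 0 B f hf.continuousOn
    (ε / (‖a‖ + 1)) (by positivity)
  refine ⟨a ∘L (Polynomial.aeval T p), tro_poly_mem M hTRO ha p, ?_⟩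
  rw [dist_eq_norm, ← cfc_polynomial p T hTsa, ← ContinuousLinearMap.comp_sub,
    ← cfc_sub f (fun x => Polynomial.eval x p) T hf.continuousOn
      (Polynomial.continuous p).continuousOn]
  have h1 : ‖cfc (fun x => f x - Polynomial.eval x p) T‖ ≤ ε / (‖a‖ + 1) := by
    refine norm_cfc_le (by positivity) fun x hx => ?_
    rw [Real.norm_eq_abs, abs_sub_comm]
    exact (hp x (hspec hx)).le
  calc ‖a ∘L cfc (fun x => f x - Polynomial.eval x p) T‖
      ≤ ‖a‖ * ‖cfc (fun x => f x - Polynomial.eval x p) T‖ := opNorm_comp_le _ _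
    _ ≤ ‖a‖ * (ε / (‖a‖ + 1)) := by gcongr
    _ < ε := by
        rw [mul_div_assoc']
        rw [div_lt_iff₀ (by positivity)]
        nlinarith [norm_nonneg a]


private lemma tro_cfc_sa {a : H →L[ℂ] K} (g : ℝ → ℝ) :
    adjoint (cfc g (adjoint a ∘L a)) = cfc g (adjoint a ∘L a) := by
  rw [← star_eq_adjoint]
  exact (cfc_predicate g (adjoint a ∘L a)).star_eq

private lemma tro_norm_sq {a : H →L[ℂ] K} {g : ℝ → ℝ} (hg : Continuous g) :
    ‖a ∘L cfc g (adjoint a ∘L a)‖ ^ 2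
      = ‖cfc (fun s => g s * (s * g s)) (adjoint a ∘L a)‖ := by
  set T : H →L[ℂ] H := adjoint a ∘L a with hTdef
  have h1 : cfc (fun s => g s * (s * g s)) T = cfc g T ∘L (T ∘L cfc g T) := by
    rw [cfc_mul g (fun s => s * g s) T hg.continuousOn
        (continuous_id.mul hg).continuousOn,
      cfc_mul (fun s => s) g T continuous_id.continuousOn hg.continuousOn,
      cfc_id' ℝ T tro_sa, ContinuousLinearMap.mul_def, ContinuousLinearMap.mul_def]
  have h2 : adjoint (a ∘L cfc g T) ∘L (a ∘L cfc g T)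
      = cfc g T ∘L (T ∘L cfc g T) := by
    rw [adjoint_comp, tro_cfc_sa g, hTdef]
    simp only [ContinuousLinearMap.comp_assoc]
  rw [h1, ← h2, pow_two, norm_adjoint_comp_self]

private lemma tro_norm_le {a : H →L[ℂ] K} {g : ℝ → ℝ} (hg : Continuous g) {c : ℝ} (hc : 0 ≤ c)
    (h : ∀ s ∈ spectrum ℝ (adjoint a ∘L a), |g s * (s * g s)| ≤ c) :
    ‖a ∘L cfc g (adjoint a ∘L a)‖ ≤ Real.sqrt c := by
  refine Real.le_sqrt_of_sq_le ?_
  rw [tro_norm_sq hg]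
  exact norm_cfc_le hc fun x hx => by rw [Real.norm_eq_abs]; exact h x hx

private lemma tro_triple {a : H →L[ℂ] K} {g : ℝ → ℝ} (hg : Continuous g) :
    (a ∘L cfc g (adjoint a ∘L a)) ∘L (adjoint (a ∘L cfc g (adjoint a ∘L a)) ∘L
        (a ∘L cfc g (adjoint a ∘L a)))
      = a ∘L cfc (fun s => g s * (g s * (s * g s))) (adjoint a ∘L a) := by
  set T : H →L[ℂ] H := adjoint a ∘L a with hTdef
  have h1 : cfc (fun s => g s * (g s * (s * g s))) T
      = cfc g T ∘L (cfc g T ∘L (T ∘L cfc g T)) := by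
    rw [cfc_mul g (fun s => g s * (s * g s)) T hg.continuousOn
        (hg.mul (continuous_id.mul hg)).continuousOn,
      cfc_mul g (fun s => s * g s) T hg.continuousOn
        (continuous_id.mul hg).continuousOn,
      cfc_mul (fun s => s) g T continuous_id.continuousOn hg.continuousOn,
      cfc_id' ℝ T tro_sa, ContinuousLinearMap.mul_def, ContinuousLinearMap.mul_def,
      ContinuousLinearMap.mul_def]
  rw [h1, adjoint_comp, tro_cfc_sa g, hTdef]
  simp only [ContinuousLinearMap.comp_assoc]

end TROAux


noncomputable def troF (n : ℕ) (s : ℝ) : ℝ := (max s (1/(n+1) : ℝ)) ^ (-(1/3) : ℝ)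

lemma troF_cont (n : ℕ) : Continuous (troF n) := by
  refine (continuous_id.max continuous_const).rpow_const fun x => Or.inl ?_
  have : (0:ℝ) < 1/(n+1) := by positivity
  exact (lt_max_of_lt_right this).ne'

lemma cube_helper {x : ℝ} (hx : 0 < x) :
    x ^ (-(1/3) : ℝ) * (x ^ (-(1/3) : ℝ) * x ^ (-(1/3) : ℝ)) = x⁻¹ := by
  rw [← Real.rpow_add hx, ← Real.rpow_add hx]
  norm_num [Real.rpow_neg_one]

lemma troF_prod (n : ℕ) (s : ℝ) :
    troF n s * (troF n s * (s * troF n s)) = s * (max s (1/(n+1) : ℝ))⁻¹ := by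
  have h : (0:ℝ) < max s (1/(n+1):ℝ) := lt_max_of_lt_right (by positivity)
  calc troF n s * (troF n s * (s * troF n s))
      = s * (troF n s * (troF n s * troF n s)) := by ring
    _ = s * (max s (1/(n+1) : ℝ))⁻¹ := by rw [troF, cube_helper h]

lemma p_conv (n : ℕ) (s : ℝ) (hs : 0 ≤ s) :
    |(troF n s * (troF n s * (s * troF n s)) - 1) *
      (s * (troF n s * (troF n s * (s * troF n s)) - 1))| ≤ 1/(n+1) := by
  have hε : (0:ℝ) < 1/(n+1) := by positivity
  rw [troF_prod]
  rcases le_or_gt (1/(n+1):ℝ) s with h | h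
  · have hs0 : 0 < s := lt_of_lt_of_le hε h
    rw [max_eq_left h, mul_inv_cancel₀ hs0.ne']
    simp only [sub_self, mul_zero, zero_mul, abs_zero]
    positivity
  · rw [max_eq_right h.le]
    have h1 : 0 ≤ s * (1/(n+1):ℝ)⁻¹ := by positivity
    have h2 : s * (1/(n+1):ℝ)⁻¹ ≤ 1 := by
      rw [mul_inv_le_iff₀ hε, one_mul]; exact h.le
    have h3 : (s * (1/(n+1):ℝ)⁻¹ - 1) * (s * (s * (1/(n+1):ℝ)⁻¹ - 1))
        = s * (s * (1/(n+1):ℝ)⁻¹ - 1)^2 := by ring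
    rw [h3, abs_of_nonneg (by positivity)]
    nlinarith [mul_nonneg hs (mul_nonneg h1 (sub_nonneg.mpr h2)), mul_nonneg hs h1, h.le]

lemma p_cauchy {N n m : ℕ} (hn : N ≤ n) (hm : N ≤ m) (s : ℝ) (hs : 0 ≤ s) :
    |(troF n s - troF m s) * (s * (troF n s - troF m s))|
      ≤ (1/(N+1):ℝ) ^ ((1:ℝ)/3) := by
  have hεN : (0:ℝ) < 1/(N+1) := by positivity
  have hrn : (1/(n+1):ℝ) ≤ 1/(N+1) := by
    apply one_div_le_one_div_of_le (by positivity)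
    exact_mod_cast Nat.succ_le_succ hn
  have hrm : (1/(m+1):ℝ) ≤ 1/(N+1) := by
    apply one_div_le_one_div_of_le (by positivity)
    exact_mod_cast Nat.succ_le_succ hm
  have hpow : (0:ℝ) ≤ (1/(N+1):ℝ) ^ ((1:ℝ)/3) := Real.rpow_nonneg hεN.le _
  rcases le_or_gt (1/(N+1):ℝ) s with h | h
  · have h1 : troF n s = s ^ (-(1/3):ℝ) := by rw [troF, max_eq_left (hrn.trans h)]
    have h2 : troF m s = s ^ (-(1/3):ℝ) := by rw [troF, max_eq_left (hrm.trans h)]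
    rw [h1, h2]
    simpa using hpow
  · rcases hs.eq_or_lt with heq | hs0
    · rw [← heq]; simpa using hpow
    · have hb : ∀ k : ℕ, troF k s ≤ s ^ (-(1/3):ℝ) := fun k =>
        Real.rpow_le_rpow_of_nonpos hs0 (le_max_left _ _) (by norm_num)
      have hposf : ∀ k : ℕ, 0 < troF k s := fun k =>
        Real.rpow_pos_of_pos (lt_max_of_lt_right (by positivity)) _
      have habs : |troF n s - troF m s| ≤ s ^ (-(1/3):ℝ) := by
        rw [abs_sub_le_iff]
        constructor <;> nlinarith [hb n, hb m, hposf n, hposf m]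
      calc |(troF n s - troF m s) * (s * (troF n s - troF m s))|
          = s * |troF n s - troF m s| ^ 2 := by
            rw [abs_mul, abs_mul, abs_of_nonneg hs]; ring
        _ ≤ s * (s ^ (-(1/3):ℝ)) ^ 2 := by gcongr
        _ = s ^ ((1:ℝ)/3) := by
            rw [← Real.rpow_natCast (s ^ (-(1/3):ℝ)) 2, ← Real.rpow_mul hs]
            nth_rewrite 1 [← Real.rpow_one s]
            rw [← Real.rpow_add hs0]
            norm_num
        _ ≤ (1/(N+1):ℝ) ^ ((1:ℝ)/3) := Real.rpow_le_rpow hs h.le (by norm_num)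

/-- Cube roots exist in TROs. -/
theorem tro_cube_root {H K : Type*}
    [NormedAddCommGroup H] [InnerProductSpace ℂ H] [CompleteSpace H]
    [NormedAddCommGroup K] [InnerProductSpace ℂ K] [CompleteSpace K]
    (M : Submodule ℂ (H →L[ℂ] K)) (hclosed : IsClosed (M : Set (H →L[ℂ] K)))
    (hTRO : ∀ x ∈ M, ∀ y ∈ M, ∀ z ∈ M, x ∘L ((adjoint y) ∘L z) ∈ M) :
    ∀ a ∈ M, ∃ b ∈ M, a = b ∘L ((adjoint b) ∘L b) := by
  intro a ha
  set T : H →L[ℂ] H := adjoint a ∘L a with hTdef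
  have hTsa : IsSelfAdjoint T := tro_sa
  set bs : ℕ → H →L[ℂ] K := fun n => a ∘L cfc (troF n) T with hbs
  have hmem : ∀ n, bs n ∈ M := fun n => tro_cfc_mem M hclosed hTRO ha (troF_cont n)
  have hdiff : ∀ n m : ℕ, bs n - bs m = a ∘L cfc (fun s => troF n s - troF m s) T := by
    intro n m
    rw [cfc_sub (troF n) (troF m) T (troF_cont n).continuousOn (troF_cont m).continuousOn,
      ContinuousLinearMap.comp_sub]
  have hcauchy : CauchySeq bs := by
    refine cauchySeq_of_le_tendsto_0 (fun N => Real.sqrt ((1/(N+1):ℝ) ^ ((1:ℝ)/3))) ?_ ?_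
    · intro n m N hn hm
      rw [dist_eq_norm, hdiff n m]
      exact tro_norm_le ((troF_cont n).sub (troF_cont m))
        (Real.rpow_nonneg (by positivity) _)
        (fun s hs => p_cauchy hn hm s (tro_spec_nonneg hs))
    · have h1 : Filter.Tendsto (fun N : ℕ => (1/(N+1):ℝ)) Filter.atTop (nhds 0) :=
        tendsto_one_div_add_atTop_nhds_zero_nat
      have h2 := ((Real.continuousAt_rpow_const 0 ((1:ℝ)/3)
        (Or.inr (by norm_num))).tendsto.comp h1)
      rw [Real.zero_rpow (by norm_num)] at h2
      have h3 := (Real.continuous_sqrt.tendsto 0).comp h2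
      rw [Real.sqrt_zero] at h3
      exact h3
  obtain ⟨b, hb⟩ := cauchySeq_tendsto_of_complete hcauchy
  refine ⟨b, hclosed.mem_of_tendsto hb (Filter.Eventually.of_forall hmem), ?_⟩
  have hc1 : Filter.Tendsto (fun n => bs n ∘L (adjoint (bs n) ∘L bs n)) Filter.atTop
      (nhds (b ∘L (adjoint b ∘L b))) := by
    have hcont : Continuous fun x : H →L[ℂ] K => x ∘L (adjoint x ∘L x) := by
      have hadj : Continuous fun x : H →L[ℂ] K => adjoint x :=
        (ContinuousLinearMap.adjoint (E := H) (F := K)).continuous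
      exact continuous_id.clm_comp (hadj.clm_comp continuous_id)
    exact (hcont.tendsto b).comp hb
  have hc2 : Filter.Tendsto (fun n => bs n ∘L (adjoint (bs n) ∘L bs n)) Filter.atTop (nhds a) := by
    rw [tendsto_iff_norm_sub_tendsto_zero]
    have hbound : ∀ n : ℕ, ‖bs n ∘L (adjoint (bs n) ∘L bs n) - a‖ ≤ Real.sqrt (1/(n+1)) := by
      intro n
      have hq : Continuous fun s : ℝ => troF n s * (troF n s * (s * troF n s)) :=
        (troF_cont n).mul ((troF_cont n).mul (continuous_id.mul (troF_cont n)))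
      have he : bs n ∘L (adjoint (bs n) ∘L bs n)
          - a = a ∘L cfc (fun s => troF n s * (troF n s * (s * troF n s)) - 1) T := by
        calc bs n ∘L (adjoint (bs n) ∘L bs n) - a
            = a ∘L cfc (fun s => troF n s * (troF n s * (s * troF n s))) T
              - a ∘L cfc (fun _ : ℝ => (1:ℝ)) T := by
              rw [tro_triple (troF_cont n), cfc_const_one ℝ T]
              simp [ContinuousLinearMap.one_def]
              rfl
          _ = a ∘L cfc (fun s => troF n s * (troF n s * (s * troF n s)) - 1) T := by
              rw [cfc_sub _ _ T hq.continuousOn continuousOn_const,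
                ContinuousLinearMap.comp_sub]
      rw [he]
      exact tro_norm_le (hq.sub continuous_const) (by positivity)
        (fun s hs => p_conv n s (tro_spec_nonneg hs))
    refine squeeze_zero (fun n => norm_nonneg _) hbound ?_
    have h1 : Filter.Tendsto (fun n : ℕ => (1/(n+1):ℝ)) Filter.atTop (nhds 0) :=
      tendsto_one_div_add_atTop_nhds_zero_nat
    have h3 := (Real.continuous_sqrt.tendsto 0).comp h1
    rw [Real.sqrt_zero] at h3
    exact h3
  exact tendsto_nhds_unique hc2 hc1
end

section
/- No isomorphism from the anti-multiplication algebra of 2×2 complex matrices onto M₂(ℂ) can be a *-isomorphism: there is no complex linear bijection φ of the 2×2 complex matrices onto themselves satisfying both φ(X · Y) = φ(X) × φ(Y) and φ(Xᴴ) = φ(X)ᴴ for all 2×2 complex matrices X, Y, where × denotes ordinary matrix multiplication and ᴴ denotes conjugate transpose. -/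
open Matrix

/-- The anti-multiplication on 2×2 complex matrices. -/
noncomputable def antiMul (X Y : Matrix (Fin 2) (Fin 2) ℂ) : Matrix (Fin 2) (Fin 2) ℂ :=
  !![-(X 0 0 * Y 0 0) + X 0 1 * Y 1 0, -(X 0 0 * Y 0 1) - X 0 1 * Y 1 1;
     -(X 1 0 * Y 0 0) - X 1 1 * Y 1 0,  X 1 0 * Y 0 1 - X 1 1 * Y 1 1]

/-- No isomorphism from the anti-multiplication algebra onto `M₂(ℂ)` is a *-isomorphism. -/
theorem antiMul_no_star_iso :
    ¬ ∃ φ : Matrix (Fin 2) (Fin 2) ℂ ≃ₗ[ℂ] Matrix (Fin 2) (Fin 2) ℂ,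
      (∀ X Y : Matrix (Fin 2) (Fin 2) ℂ, φ (antiMul X Y) = φ X * φ Y) ∧
      (∀ X : Matrix (Fin 2) (Fin 2) ℂ, φ Xᴴ = (φ X)ᴴ) := by
  rintro ⟨φ, hmul, hstar⟩
  -- first: φ (-1) = 1
  have hA : antiMul (-1) (φ.symm 1) = φ.symm 1 := by
    ext i j
    fin_cases i <;> fin_cases j <;>
      simp [antiMul, Matrix.one_apply]
  have hunit : φ (-1 : Matrix (Fin 2) (Fin 2) ℂ) = 1 := by
    have h := hmul (-1) (φ.symm 1)
    rw [hA, φ.apply_symm_apply, mul_one] at h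
    exact h.symm
  have hone : φ (1 : Matrix (Fin 2) (Fin 2) ℂ) = -1 := by
    have h := map_neg φ (-1 : Matrix (Fin 2) (Fin 2) ℂ)
    rw [neg_neg, hunit] at h
    exact h
  set σ : Matrix (Fin 2) (Fin 2) ℂ := !![0,1;1,0] with hσ
  have hσσ : antiMul σ σ = 1 := by
    ext i j
    fin_cases i <;> fin_cases j <;> simp [antiMul, hσ, Matrix.one_apply]
  have hsq : φ σ * φ σ = -1 := by
    rw [← hmul, hσσ, hone]
  have hherm : (φ σ)ᴴ = φ σ := by
    rw [← hstar]
    congr 1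
    ext i j
    fin_cases i <;> fin_cases j <;> simp [hσ]
  set H := φ σ with hH
  have h00 : H 0 0 * H 0 0 + H 0 1 * H 1 0 = -1 := by
    have := congrFun (congrFun hsq 0) 0
    simpa [Matrix.mul_apply, Fin.sum_univ_two, Matrix.one_apply] using this
  have ha : starRingEnd ℂ (H 0 0) = H 0 0 := by
    have := congrFun (congrFun hherm 0) 0
    simpa [Matrix.conjTranspose_apply] using this
  have hb : starRingEnd ℂ (H 0 1) = H 1 0 := by
    have := congrFun (congrFun hherm 1) 0
    simpa [Matrix.conjTranspose_apply] using this
  have haim : (H 0 0).im = 0 := by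
    have h2 := congrArg Complex.im ha
    simp [Complex.conj_im] at h2
    linarith
  rw [← hb] at h00
  have hre := congrArg Complex.re h00
  simp [Complex.add_re, Complex.mul_re, Complex.conj_re, Complex.conj_im] at hre
  nlinarith [sq_nonneg (H 0 0).re, sq_nonneg (H 0 0).im, sq_nonneg (H 0 1).re, sq_nonneg (H 0 1).im, hre]
end
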